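/- If there are countably infinitely many room configurations (transcripts, i.e., finite strings), then even with r > 1 rooms and arbitrary unknown initial configurations, the prisoners have a winning strategy: the append-your-name-and-visit-count strategy guarantees that under every valid schedule some prisoner eventually correctly concludes that every prisoner has visited every room, and no prisoner ever declares incorrectly. -/

import Mathlib

/-- A prisoner's observation history: the list of (configuration seen on entry,
configuration left on exit) for each of his visits so far. -/
abbrev Hist (C : Type) := List (C × C)

/-- A deterministic strategy: for each prisoner, a function from his history
and the configuration of the room he enters to the configuration he leaves the
room in, together with whether he declares. -/
abbrev Strategy (n : ℕ) (C : Type) := Fin n → Hist C → C → C × Bool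

/-- A schedule: who visits which room at each step. -/
abbrev Schedule (n r : ℕ) := ℕ → Fin n × Fin r

/-- Global state of an execution. -/
structure PState (n r : ℕ) (C : Type) where
  rooms : Fin r → C
  hist : Fin n → Hist C
  declared : Bool

/-- One visit of prisoner `v.1` to room `v.2`. -/
def pstep {n r : ℕ} {C : Type} (σ : Strategy n C) (v : Fin n × Fin r)
    (s : PState n r C) : PState n r C :=
  let cur := s.rooms v.2
  let a := σ v.1 (s.hist v.1) cur
  { rooms := Function.update s.rooms v.2 a.1
    hist := Function.update s.hist v.1 (s.hist v.1 ++ [(cur, a.1)])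
    declared := s.declared || a.2 }

/-- The state after `t` visits, starting from initial room configurations `init`. -/
def prun {n r : ℕ} {C : Type} (σ : Strategy n C) (sch : Schedule n r)
    (init : Fin r → C) : ℕ → PState n r C
  | 0 => ⟨init, fun _ => [], false⟩
  | t + 1 => pstep σ (sch t) (prun σ sch init t)

/-- A schedule is valid if every prisoner visits every room infinitely often. -/
def ValidSchedule {n r : ℕ} (sch : Schedule n r) : Prop :=
  ∀ (p : Fin n) (rm : Fin r), {t | sch t = (p, rm)}.Infinite

/-- Prisoner `p` has visited room `rm` within the first `t` visits. -/
def VisitedBy {n r : ℕ} (sch : Schedule n r) (t : ℕ) (p : Fin n) (rm : Fin r) : Prop :=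
  ∃ t' < t, sch t' = (p, rm)

/-- A strategy is winning for initial configurations `init` if under every
valid schedule some prisoner eventually declares, and every declaration occurs
only after each prisoner has visited every room at least once. -/
def Winning {n r : ℕ} {C : Type} (σ : Strategy n C) (init : Fin r → C) : Prop :=
  ∀ sch : Schedule n r, ValidSchedule sch →
    (∃ t, (prun σ sch init t).declared = true) ∧
    (∀ t, (prun σ sch init t).declared = true → ∀ p rm, VisitedBy sch t p rm)

namespace PP

variable {n r : ℕ} (σ : Strategy n (List ℕ)) (sch : Schedule n r) (init : Fin r → List ℕ)

/-- content of room `rm` at time `t` -/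
def ct (t : ℕ) (rm : Fin r) : List ℕ := (prun σ sch init t).rooms rm
/-- history of prisoner `p` at time `t` -/
def hsn (t : ℕ) (p : Fin n) : Hist (List ℕ) := (prun σ sch init t).hist p
/-- number of visits of prisoner `p` before time `t` -/
def hl (t : ℕ) (p : Fin n) : ℕ := (hsn σ sch init t p).length

variable (hσ : ∀ (p : Fin n) (h : Hist (List ℕ)) (c : List ℕ),
    (σ p h c).1 = c ++ [(p : ℕ), h.length + 1])

lemma ct_zero (rm : Fin r) : ct σ sch init 0 rm = init rm := rfl
lemma hsn_zero (p : Fin n) : hsn σ sch init 0 p = [] := rfl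
lemma hl_zero (p : Fin n) : hl σ sch init 0 p = 0 := rfl

include hσ in
lemma ct_succ (t : ℕ) (rm : Fin r) :
    ct σ sch init (t+1) rm =
      if rm = (sch t).2 then
        ct σ sch init t rm ++ [((sch t).1 : ℕ), hl σ sch init t (sch t).1 + 1]
      else ct σ sch init t rm := by
  show (pstep σ (sch t) (prun σ sch init t)).rooms rm = _
  simp only [pstep, Function.update_apply, hσ]
  split <;> simp_all [ct, hl, hsn]

lemma hsn_succ (t : ℕ) (p : Fin n) :
    hsn σ sch init (t+1) p =
      if p = (sch t).1 then
        hsn σ sch init t p ++ [(ct σ sch init t (sch t).2,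
          (σ (sch t).1 (hsn σ sch init t (sch t).1) (ct σ sch init t (sch t).2)).1)]
      else hsn σ sch init t p := by
  show (pstep σ (sch t) (prun σ sch init t)).hist p = _
  simp only [pstep, Function.update_apply]
  split <;> simp_all [ct, hsn]

include hσ in
lemma hsn_succ' (t : ℕ) (p : Fin n) (hp : (sch t).1 = p) :
    hsn σ sch init (t+1) p =
      hsn σ sch init t p ++ [(ct σ sch init t (sch t).2,
        ct σ sch init t (sch t).2 ++ [(p : ℕ), hl σ sch init t p + 1])] := by
  rw [hsn_succ, if_pos hp.symm, hσ, hp]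
  rfl

lemma hl_succ (t : ℕ) (p : Fin n) :
    hl σ sch init (t+1) p =
      if p = (sch t).1 then hl σ sch init t p + 1 else hl σ sch init t p := by
  unfold hl
  rw [hsn_succ]
  split <;> simp

include hσ in
lemma ct_prefix_succ (t : ℕ) (rm : Fin r) :
    ct σ sch init t rm <+: ct σ sch init (t+1) rm := by
  rw [ct_succ σ sch init hσ]
  split
  · exact List.prefix_append _ _
  · exact List.prefix_refl _

include hσ in
lemma ct_prefix (rm : Fin r) : ∀ {t t' : ℕ}, t ≤ t' →
    ct σ sch init t rm <+: ct σ sch init t' rm := by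
  intro t t' h
  induction t' with
  | zero => cases Nat.le_zero.mp h; exact List.prefix_refl _
  | succ t' ih =>
    rcases Nat.lt_or_ge t (t'+1) with h' | h'
    · exact (ih (Nat.lt_succ_iff.mp h')).trans (ct_prefix_succ σ sch init hσ t' rm)
    · cases Nat.le_antisymm h h'; exact List.prefix_refl _

include hσ in
lemma init_prefix_ct (t : ℕ) (rm : Fin r) : init rm <+: ct σ sch init t rm :=
  ct_prefix σ sch init hσ rm (Nat.zero_le t)

include hσ in
lemma ct_len_mono (rm : Fin r) {t t' : ℕ} (h : t ≤ t') :
    (ct σ sch init t rm).length ≤ (ct σ sch init t' rm).length :=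
  (ct_prefix σ sch init hσ rm h).length_le

lemma hsn_prefix_succ (t : ℕ) (p : Fin n) :
    hsn σ sch init t p <+: hsn σ sch init (t+1) p := by
  rw [hsn_succ]
  split
  · exact List.prefix_append _ _
  · exact List.prefix_refl _

lemma hsn_prefix (p : Fin n) : ∀ {t t' : ℕ}, t ≤ t' →
    hsn σ sch init t p <+: hsn σ sch init t' p := by
  intro t t' h
  induction t' with
  | zero => cases Nat.le_zero.mp h; exact List.prefix_refl _
  | succ t' ih =>
    rcases Nat.lt_or_ge t (t'+1) with h' | h'
    · exact (ih (Nat.lt_succ_iff.mp h')).trans (hsn_prefix_succ σ sch init t' p)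
    · cases Nat.le_antisymm h h'; exact List.prefix_refl _

lemma hl_mono (p : Fin n) {t t' : ℕ} (h : t ≤ t') :
    hl σ sch init t p ≤ hl σ sch init t' p :=
  (hsn_prefix σ sch init p h).length_le

lemma hl_visit_succ (t : ℕ) (p : Fin n) (hp : (sch t).1 = p) :
    hl σ sch init (t+1) p = hl σ sch init t p + 1 := by
  rw [hl_succ, if_pos hp.symm]

lemma hl_visit_lt (p : Fin n) {s t : ℕ} (hp : (sch s).1 = p) (h : s < t) :
    hl σ sch init s p < hl σ sch init t p :=
  Nat.lt_of_lt_of_le (by rw [hl_visit_succ σ sch init s p hp]; omega)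
    (hl_mono σ sch init p h)

lemma visit_time_unique (p : Fin n) {s s' : ℕ} (hp : (sch s).1 = p)
    (hp' : (sch s').1 = p) (h : hl σ sch init s p = hl σ sch init s' p) : s = s' := by
  rcases lt_trichotomy s s' with h' | h' | h'
  · exact absurd h (Nat.ne_of_lt (hl_visit_lt σ sch init p hp h'))
  · exact h'
  · exact absurd h.symm (Nat.ne_of_lt (hl_visit_lt σ sch init p hp' h'))

lemma visit_lt_of_hl_lt (p : Fin n) {s s' : ℕ} (h : hl σ sch init s p < hl σ sch init s' p) :
    s < s' := by
  by_contra h'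
  exact absurd (hl_mono σ sch init p (Nat.le_of_not_lt h')) (Nat.not_le_of_lt h)

lemma visit_time_exists (p : Fin n) : ∀ (t v : ℕ), v < hl σ sch init t p →
    ∃ s, s < t ∧ (sch s).1 = p ∧ hl σ sch init s p = v := by
  intro t
  induction t with
  | zero => intro v hv; rw [hl_zero] at hv; omega
  | succ t ih =>
    intro v hv
    rw [hl_succ] at hv
    by_cases hp : p = (sch t).1
    · rw [if_pos hp] at hv
      rcases Nat.lt_or_ge v (hl σ sch init t p) with h' | h'
      · obtain ⟨s, h1, h2, h3⟩ := ih v h'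
        exact ⟨s, Nat.lt_succ_of_lt h1, h2, h3⟩
      · exact ⟨t, Nat.lt_succ_self t, hp.symm, by omega⟩
    · rw [if_neg hp] at hv
      obtain ⟨s, h1, h2, h3⟩ := ih v hv
      exact ⟨s, Nat.lt_succ_of_lt h1, h2, h3⟩

lemma prefix_getD {α : Type*} (d : α) {l1 l2 : List α} (h : l1 <+: l2) {i : ℕ}
    (hi : i < l1.length) : l2.getD i d = l1.getD i d := by
  rw [List.getD_eq_getElem _ _ hi, List.getD_eq_getElem _ _ (hi.trans_le h.length_le)]
  exact (List.IsPrefix.getElem h hi).symm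

include hσ in
lemma hsn_getD_visit {s t : ℕ} {p : Fin n} (hp : (sch s).1 = p) (hst : s < t) :
    (hsn σ sch init t p).getD (hl σ sch init s p) ([], []) =
      (ct σ sch init s (sch s).2,
       ct σ sch init s (sch s).2 ++ [(p : ℕ), hl σ sch init s p + 1]) := by
  have h1 := hsn_succ' σ sch init hσ s p hp
  have hpre : hsn σ sch init (s+1) p <+: hsn σ sch init t p :=
    hsn_prefix σ sch init p hst
  have hlen : hl σ sch init s p < (hsn σ sch init (s+1) p).length := by
    show _ < hl σ sch init (s+1) p
    rw [hl_visit_succ σ sch init s p hp]; omega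
  rw [prefix_getD _ hpre hlen, h1]
  have hid : hl σ sch init s p = (hsn σ sch init s p).length := rfl
  rw [hid, List.getD_eq_getElem _ _ (by simp), List.getElem_append_right (le_refl _)]
  simp

include hσ in
lemma ct_len_even (t : ℕ) (rm : Fin r) :
    ∃ k, (ct σ sch init t rm).length = (init rm).length + 2 * k := by
  induction t with
  | zero => exact ⟨0, by simp [ct_zero]⟩
  | succ t ih =>
    obtain ⟨k, hk⟩ := ih
    rw [ct_succ σ sch init hσ]
    split
    · exact ⟨k+1, by simp [hk]; omega⟩
    · exact ⟨k, hk⟩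

include hσ in
/-- every aligned position beyond the initial string in a room's content is an
entry `[name, count]` written by an actual visitor. -/
lemma parse (rm : Fin r) : ∀ (t pos : ℕ), (init rm).length ≤ pos →
    Even (pos - (init rm).length) → pos < (ct σ sch init t rm).length →
    ∃ s, s < t ∧ (sch s).2 = rm ∧ (ct σ sch init s rm).length = pos ∧
      (ct σ sch init t rm).getD pos 0 = ((sch s).1 : ℕ) ∧
      (ct σ sch init t rm).getD (pos+1) 0 = hl σ sch init s (sch s).1 + 1 ∧
      pos + 2 ≤ (ct σ sch init t rm).length := by
  intro t
  induction t with
  | zero => intro pos h1 h2 h3; rw [ct_zero] at h3; omega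
  | succ t ih =>
    intro pos h1 h2 h3
    by_cases hp : pos < (ct σ sch init t rm).length
    · obtain ⟨s, g1, g2, g3, g4, g5, g6⟩ := ih pos h1 h2 hp
      have hpre := ct_prefix_succ σ sch init hσ t rm
      refine ⟨s, Nat.lt_succ_of_lt g1, g2, g3, ?_, ?_, ?_⟩
      · rw [prefix_getD _ hpre hp]; exact g4
      · rw [prefix_getD _ hpre (by omega)]; exact g5
      · exact le_trans g6 hpre.length_le
    · -- pos is within the new entry; must be the name slot by parity
      have hcs := ct_succ σ sch init hσ t rm
      by_cases hv : rm = (sch t).2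
      · rw [if_pos hv] at hcs
        have hlen : (ct σ sch init (t+1) rm).length = (ct σ sch init t rm).length + 2 := by
          rw [hcs]; simp
        obtain ⟨k, hk⟩ := ct_len_even σ sch init hσ t rm
        obtain ⟨m, hm⟩ := h2
        have hpos : pos = (ct σ sch init t rm).length := by omega
        refine ⟨t, Nat.lt_succ_self t, hv.symm, hpos.symm, ?_, ?_, by omega⟩
        · rw [hcs, hpos, List.getD_eq_getElem _ _ (by simp),
            List.getElem_append_right (le_refl _)]
          simp
        · rw [hcs, hpos, List.getD_eq_getElem _ _ (by first | (simp; omega) | simp | omega),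
            List.getElem_append_right (by omega)]
          simp
      · rw [if_neg hv] at hcs
        rw [hcs] at h3
        omega

include hσ in
/-- conversely, a visit leaves its name at the aligned position. -/
lemma emit {s t : ℕ} {rm : Fin r} (hv : (sch s).2 = rm) (hst : s < t) :
    (ct σ sch init t rm).getD (ct σ sch init s rm).length 0 = ((sch s).1 : ℕ) ∧
      (ct σ sch init s rm).length + 2 ≤ (ct σ sch init t rm).length := by
  have hcs := ct_succ σ sch init hσ s rm
  rw [if_pos hv.symm] at hcs
  have hpre : ct σ sch init (s+1) rm <+: ct σ sch init t rm :=
    ct_prefix σ sch init hσ rm hst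
  have hlen : (ct σ sch init (s+1) rm).length = (ct σ sch init s rm).length + 2 := by
    rw [hcs]; simp
  constructor
  · rw [prefix_getD _ hpre (by omega), hcs,
      List.getD_eq_getElem _ _ (by simp), List.getElem_append_right (le_refl _)]
    simp
  · rw [← hlen]; exact hpre.length_le

include hσ in
/-- THE CORE RIGIDITY LEMMA: if the configuration prisoner `p` left at his
visit at time `s` (whose count is at least `n` and whose in-config is at least
as long as the initial string of room `B`) is a prefix of room `B`'s content at
some time, then `B` is the very room `p` visited at time `s`. -/
lemma same_room {p : Fin n} {s s' : ℕ} (hs1 : (sch s).1 = p) {B : Fin r}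
    (hinit : (init B).length ≤ (ct σ sch init s (sch s).2).length)
    (hcnt : n ≤ hl σ sch init s p + 1)
    (hpre : (ct σ sch init s (sch s).2 ++ [(p : ℕ), hl σ sch init s p + 1])
      <+: ct σ sch init s' B) :
    B = (sch s).2 := by
  set P := (ct σ sch init s (sch s).2).length with hP
  have hlenB : P + 2 ≤ (ct σ sch init s' B).length := by
    have := hpre.length_le; simpa using this
  have hPv : (ct σ sch init s' B).getD P 0 = (p : ℕ) := by
    rw [prefix_getD _ hpre (by simp; omega), List.getD_eq_getElem _ _ (by simp; omega),
      List.getElem_append_right (le_refl _)]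
    simp [hP]
  have hP1v : (ct σ sch init s' B).getD (P+1) 0 = hl σ sch init s p + 1 := by
    rw [prefix_getD _ hpre (by simp; omega), List.getD_eq_getElem _ _ (by first | (simp; omega) | simp | omega),
      List.getElem_append_right (by omega)]
    simp [hP]
  rcases Nat.even_or_odd (P - (init B).length) with he | ho
  · obtain ⟨u, g1, g2, g3, g4, g5, g6⟩ :=
      parse σ sch init hσ B s' P hinit he (by omega)
    rw [hPv] at g4
    have hu1 : (sch u).1 = p := Fin.val_injective g4.symm
    rw [hP1v, hu1] at g5
    have : hl σ sch init u p = hl σ sch init s p := by omega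
    have hus : u = s := visit_time_unique σ sch init p hu1 hs1 this
    rw [← hus, ← g2]
  · have he1 : Even (P + 1 - (init B).length) := by
      obtain ⟨m, hm⟩ := ho; exact ⟨m+1, by omega⟩
    obtain ⟨u, g1, g2, g3, g4, g5, g6⟩ :=
      parse σ sch init hσ B s' (P+1) (by omega) he1 (by omega)
    rw [hP1v] at g4
    have := (sch u).1.isLt
    omega

/-- The declaration certificate, an observable property of a prisoner's history.
`a` are anchor visits to `r` pairwise-distinct rooms (bounding every room's
initial string by `L`), `A` are late anchor visits (in-config at least `L`,
count at least `n`) to `r` pairwise-distinct rooms, and `j b` is a revisit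
confirming that every prisoner left an entry in room of `A b` meanwhile. -/
def Cert (n r : ℕ) (h : Hist (List ℕ)) : Prop :=
  ∃ (L : ℕ) (a A j : Fin r → ℕ),
    StrictMono a ∧ StrictMono A ∧
    (∀ b, a b < h.length) ∧ (∀ b, j b < h.length) ∧
    (∀ b, A b < j b) ∧ (∀ b, n ≤ A b + 1) ∧
    (∀ b, (h.getD (a b) ([],[])).1.length ≤ L) ∧
    (∀ b, L ≤ (h.getD (A b) ([],[])).1.length) ∧
    (∀ b b', b < b' → ¬ ((h.getD (a b) ([],[])).2 <+: (h.getD (a b') ([],[])).1)) ∧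
    (∀ b b', b < b' → ¬ ((h.getD (A b) ([],[])).2 <+: (h.getD (A b') ([],[])).1)) ∧
    (∀ b, (h.getD (A b) ([],[])).2 <+: (h.getD (j b) ([],[])).1) ∧
    (∀ b, ∀ q : Fin n, ∃ m,
       (h.getD (A b) ([],[])).2.length + 2*m + 1 < (h.getD (j b) ([],[])).1.length ∧
       (h.getD (j b) ([],[])).1.getD ((h.getD (A b) ([],[])).2.length + 2*m) 0 = (q : ℕ))

include hσ in
theorem cert_sound (t : ℕ) (p : Fin n) (hc : Cert n r (hsn σ sch init t p)) :
    ∀ q rm, VisitedBy sch t q rm := by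
  obtain ⟨L, a, A, j, hma, hmA, halt, hjlt, hAj, hAn, haL, hAL, hnpa, hnpA, hpre, hgap⟩ := hc
  choose sa hsa_lt hsa_p hsa_hl using fun b =>
    visit_time_exists σ sch init p t (a b) (halt b)
  choose sA hsA_lt hsA_p hsA_hl using fun b =>
    visit_time_exists σ sch init p t (A b) ((hAj b).trans (hjlt b))
  choose sj hsj_lt hsj_p hsj_hl using fun b =>
    visit_time_exists σ sch init p t (j b) (hjlt b)
  have hga : ∀ b, (hsn σ sch init t p).getD (a b) ([],[]) =
      (ct σ sch init (sa b) (sch (sa b)).2,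
       ct σ sch init (sa b) (sch (sa b)).2 ++ [(p : ℕ), a b + 1]) := by
    intro b
    rw [← hsa_hl b]
    exact hsn_getD_visit σ sch init hσ (hsa_p b) (hsa_lt b)
  have hgA : ∀ b, (hsn σ sch init t p).getD (A b) ([],[]) =
      (ct σ sch init (sA b) (sch (sA b)).2,
       ct σ sch init (sA b) (sch (sA b)).2 ++ [(p : ℕ), A b + 1]) := by
    intro b
    rw [← hsA_hl b]
    exact hsn_getD_visit σ sch init hσ (hsA_p b) (hsA_lt b)
  have hgj : ∀ b, (hsn σ sch init t p).getD (j b) ([],[]) =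
      (ct σ sch init (sj b) (sch (sj b)).2,
       ct σ sch init (sj b) (sch (sj b)).2 ++ [(p : ℕ), j b + 1]) := by
    intro b
    rw [← hsj_hl b]
    exact hsn_getD_visit σ sch init hσ (hsj_p b) (hsj_lt b)
  -- generic: out-config at a visit equals next-step content of its room
  have hout : ∀ (sw : ℕ), (sch sw).1 = p →
      ct σ sch init sw (sch sw).2 ++ [(p : ℕ), hl σ sch init sw p + 1] =
        ct σ sch init (sw + 1) (sch sw).2 := by
    intro sw hp
    rw [ct_succ σ sch init hσ, if_pos rfl, hp]
  -- generic pairwise-distinct-rooms argument for anchor families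
  have hinj : ∀ (w sw : Fin r → ℕ),
      (∀ b, sw b < t) → (∀ b, (sch (sw b)).1 = p) →
      (∀ b, hl σ sch init (sw b) p = w b) → StrictMono w →
      (∀ b b', b < b' → ¬ (((hsn σ sch init t p).getD (w b) ([],[])).2 <+:
        ((hsn σ sch init t p).getD (w b') ([],[])).1)) →
      Function.Injective (fun b => (sch (sw b)).2) := by
    intro w sw hlt hp hhl hm hnp
    have key : ∀ b b', b < b' → (sch (sw b)).2 ≠ (sch (sw b')).2 := by
      intro b b' hbb hroom
      apply hnp b b' hbb
      have e1 := hsn_getD_visit σ sch init hσ (hp b) (hlt b)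
      have e2 := hsn_getD_visit σ sch init hσ (hp b') (hlt b')
      rw [hhl b] at e1
      rw [hhl b'] at e2
      rw [e1, e2]
      show ct σ sch init (sw b) (sch (sw b)).2 ++ [(p : ℕ), w b + 1]
        <+: ct σ sch init (sw b') (sch (sw b')).2
      rw [← hhl b, hout (sw b) (hp b), hroom]
      apply ct_prefix σ sch init hσ
      have : sw b < sw b' := by
        apply visit_lt_of_hl_lt σ sch init p
        rw [hhl b, hhl b']
        exact hm hbb
      omega
    intro b b' heq
    by_contra hne
    rcases Ne.lt_or_gt hne with h' | h'
    · exact key b b' h' heq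
    · exact key b' b h' heq.symm
  have hRa_surj : Function.Surjective (fun b => (sch (sa b)).2) :=
    Finite.injective_iff_surjective.mp (hinj a sa hsa_lt hsa_p hsa_hl hma hnpa)
  have hRA_surj : Function.Surjective (fun b => (sch (sA b)).2) :=
    Finite.injective_iff_surjective.mp (hinj A sA hsA_lt hsA_p hsA_hl hmA hnpA)
  -- every room's initial string has length at most L
  have hinitL : ∀ rm : Fin r, (init rm).length ≤ L := by
    intro rm
    obtain ⟨b, hb⟩ := hRa_surj rm
    calc (init rm).length ≤ (ct σ sch init (sa b) rm).length :=
          (init_prefix_ct σ sch init hσ (sa b) rm).length_le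
      _ ≤ L := by
          have := haL b
          rw [hga b] at this
          simpa [← hb] using this
  -- each confirmation visit `j b` is in the same room as `A b`
  have hsame : ∀ b, (sch (sj b)).2 = (sch (sA b)).2 := by
    intro b
    apply same_room σ sch init hσ (hsA_p b)
    · calc (init (sch (sj b)).2).length ≤ L := hinitL _
        _ ≤ (ct σ sch init (sA b) (sch (sA b)).2).length := by
            have := hAL b
            rw [hgA b] at this
            simpa using this
    · rw [hsA_hl b]; exact hAn b
    · have hp := hpre b
      rw [hgA b, hgj b] at hp
      rw [hsA_hl b]
      exact hp
  -- main conclusion via the gap entries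
  intro q rm
  obtain ⟨b, hb⟩ := hRA_surj rm
  obtain ⟨m, hm1, hm2⟩ := hgap b q
  rw [hgA b, hgj b] at hm1 hm2
  simp only at hm1 hm2
  rw [hsame b] at hm1 hm2
  -- set up position arithmetic
  obtain ⟨k, hk⟩ := ct_len_even σ sch init hσ (sA b) (sch (sA b)).2
  have hlen2 : (ct σ sch init (sA b) (sch (sA b)).2 ++ [(p : ℕ), A b + 1]).length
      = (init (sch (sA b)).2).length + 2 * k + 2 := by simp [hk]
  have hEv : Even ((ct σ sch init (sA b) (sch (sA b)).2 ++ [(p : ℕ), A b + 1]).length + 2*m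
      - (init (sch (sA b)).2).length) := by
    rw [hlen2]; exact ⟨k + 1 + m, by omega⟩
  obtain ⟨u, g1, g2, g3, g4, g5, g6⟩ := parse σ sch init hσ (sch (sA b)).2 (sj b)
      ((ct σ sch init (sA b) (sch (sA b)).2 ++ [(p : ℕ), A b + 1]).length + 2*m)
      (by rw [hlen2]; omega) hEv (by omega)
  rw [hm2] at g4
  have hq : (sch u).1 = q := Fin.val_injective g4.symm
  refine ⟨u, lt_trans g1 (hsj_lt b), ?_⟩
  have hb' : (sch (sA b)).2 = rm := hb
  rw [← hq, ← hb', ← g2]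

lemma exists_visit_ge (hv : ValidSchedule sch) (p : Fin n) (rm : Fin r) (T : ℕ) :
    ∃ s, T ≤ s ∧ sch s = (p, rm) := by
  obtain ⟨b, hb1, hb2⟩ := (hv p rm).exists_gt T
  exact ⟨b, le_of_lt hb2, hb1⟩

include hσ in
lemma ct_len_unbounded (hv : ValidSchedule sch) (hn : 0 < n) (rm : Fin r) (K : ℕ) :
    ∃ T, K ≤ (ct σ sch init T rm).length := by
  induction K with
  | zero => exact ⟨0, Nat.zero_le _⟩
  | succ K ih =>
    obtain ⟨T, hT⟩ := ih
    obtain ⟨s, hs1, hs2⟩ := exists_visit_ge sch hv ⟨0, hn⟩ rm T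
    refine ⟨s + 1, ?_⟩
    have h1 : (ct σ sch init s rm).length + 2 = (ct σ sch init (s+1) rm).length := by
      rw [ct_succ σ sch init hσ, if_pos (by rw [hs2])]
      simp
    have h2 := ct_len_mono σ sch init hσ rm hs1
    omega

include hσ in
lemma all_rooms_ge (hv : ValidSchedule sch) (hn : 0 < n) (K : ℕ) :
    ∃ T, ∀ t, T ≤ t → ∀ rm : Fin r, K ≤ (ct σ sch init t rm).length := by
  choose T hT using fun rm => ct_len_unbounded σ sch init hσ hv hn rm K
  refine ⟨Finset.univ.sup T, fun t ht rm => ?_⟩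
  exact le_trans (hT rm) (ct_len_mono σ sch init hσ rm
    (le_trans (Finset.le_sup (Finset.mem_univ rm)) ht))

lemma hl_unbounded (hv : ValidSchedule sch) (hr0 : 0 < r) (p : Fin n) (K : ℕ) :
    ∃ T, ∀ t, T ≤ t → K ≤ hl σ sch init t p := by
  induction K with
  | zero => exact ⟨0, fun t _ => Nat.zero_le _⟩
  | succ K ih =>
    obtain ⟨T, hT⟩ := ih
    obtain ⟨s, hs1, hs2⟩ := exists_visit_ge sch hv p ⟨0, hr0⟩ T
    refine ⟨s + 1, fun t ht => ?_⟩
    have h1 : hl σ sch init (s+1) p = hl σ sch init s p + 1 :=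
      hl_visit_succ σ sch init s p (by rw [hs2])
    have h2 := hT s hs1
    have h3 := hl_mono σ sch init p ht
    omega

lemma exists_incr_visits (hv : ValidSchedule sch) (p0 : Fin n) (hr0 : 0 < r) (T0 : ℕ) :
    ∃ g : Fin r → ℕ, StrictMono g ∧ (∀ b, T0 ≤ g b) ∧ ∀ b : Fin r, sch (g b) = (p0, b) := by
  choose f hf1 hf2 using fun (T : ℕ) (rm : Fin r) => exists_visit_ge sch hv p0 rm T
  let G : ℕ → ℕ := fun k => Nat.rec (f T0 ⟨0 % r, Nat.mod_lt _ hr0⟩)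
    (fun k prev => f (prev + 1) ⟨(k+1) % r, Nat.mod_lt _ hr0⟩) k
  have hGsucc : ∀ k, G (k+1) = f (G k + 1) ⟨(k+1) % r, Nat.mod_lt _ hr0⟩ := fun k => rfl
  have hGmono : StrictMono G := by
    apply strictMono_nat_of_lt_succ
    intro k
    rw [hGsucc k]
    have := hf1 (G k + 1) ⟨(k+1) % r, Nat.mod_lt _ hr0⟩
    omega
  have hGge : T0 ≤ G 0 := hf1 T0 _
  have hGsch : ∀ k, sch (G k) = (p0, ⟨k % r, Nat.mod_lt _ hr0⟩) := by
    intro k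
    cases k with
    | zero => exact hf2 T0 _
    | succ k => rw [hGsucc k]; exact hf2 _ _
  refine ⟨fun b => G b.val, fun b b' hb => hGmono hb, fun b => le_trans hGge
    (hGmono.monotone (Nat.zero_le _)), fun b => ?_⟩
  rw [hGsch b.val]
  congr 1
  exact Fin.ext (Nat.mod_eq_of_lt b.isLt)

include hσ in
theorem cert_live (hv : ValidSchedule sch) (hn : 0 < n) (hr0 : 0 < r) :
    ∃ t, (sch t).1 = ⟨0, hn⟩ ∧ Cert n r (hsn σ sch init t ⟨0, hn⟩) := by
  set p0 : Fin n := ⟨0, hn⟩ with hp0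
  set M := Finset.univ.sup (fun rm : Fin r => (init rm).length) with hMdef
  have hM : ∀ rm : Fin r, (init rm).length ≤ M :=
    fun rm => Finset.le_sup (f := fun rm : Fin r => (init rm).length) (Finset.mem_univ rm)
  obtain ⟨TM, hTM⟩ := all_rooms_ge σ sch init hσ hv hn M
  obtain ⟨Tn, hTn⟩ := hl_unbounded σ sch init hv hr0 p0 n
  obtain ⟨ga, hga_mono, hga_ge, hga_sch⟩ := exists_incr_visits sch hv p0 hr0 (max TM Tn)
  set L := Finset.univ.sup (fun b : Fin r => (ct σ sch init (ga b) b).length) with hLdef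
  have hL : ∀ b : Fin r, (ct σ sch init (ga b) b).length ≤ L :=
    fun b => Finset.le_sup (f := fun b : Fin r => (ct σ sch init (ga b) b).length)
      (Finset.mem_univ b)
  obtain ⟨TL, hTL⟩ := all_rooms_ge σ sch init hσ hv hn L
  obtain ⟨gA, hgA_mono, hgA_ge, hgA_sch⟩ :=
    exists_incr_visits sch hv p0 hr0 (max TL (max TM Tn))
  choose u hu1 hu2 using fun (b : Fin r) (q : Fin n) =>
    exists_visit_ge sch hv q b (gA b + 1)
  choose gj hgj1 hgj2 using fun b : Fin r =>
    exists_visit_ge sch hv p0 b ((Finset.univ.sup (u b)) + 1)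
  have hu_lt_gj : ∀ b q, u b q < gj b := fun b q =>
    lt_of_lt_of_le (Nat.lt_succ_of_le (Finset.le_sup (Finset.mem_univ q))) (hgj1 b)
  have hgA_lt_gj : ∀ b, gA b < gj b := fun b =>
    lt_of_lt_of_le (hu1 b p0) (le_of_lt (hu_lt_gj b p0))
  obtain ⟨tt, htt1, htt2⟩ := exists_visit_ge sch hv p0 ⟨0, hr0⟩
    ((Finset.univ.sup gj + Finset.univ.sup ga + Finset.univ.sup gA) + 1)
  have htt_p : (sch tt).1 = p0 := by rw [htt2]
  have hga_tt : ∀ b, ga b < tt :=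
    fun b => lt_of_lt_of_le (Nat.lt_succ_of_le (by
      have := Finset.le_sup (f := ga) (Finset.mem_univ b); omega)) htt1
  have hgA_tt : ∀ b, gA b < tt :=
    fun b => lt_of_lt_of_le (Nat.lt_succ_of_le (by
      have := Finset.le_sup (f := gA) (Finset.mem_univ b); omega)) htt1
  have hgj_tt : ∀ b, gj b < tt :=
    fun b => lt_of_lt_of_le (Nat.lt_succ_of_le (by
      have := Finset.le_sup (f := gj) (Finset.mem_univ b); omega)) htt1
  -- component facts
  have hga_p : ∀ b, (sch (ga b)).1 = p0 := fun b => by rw [hga_sch b]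
  have hga_r : ∀ b, (sch (ga b)).2 = b := fun b => by rw [hga_sch b]
  have hgA_p : ∀ b, (sch (gA b)).1 = p0 := fun b => by rw [hgA_sch b]
  have hgA_r : ∀ b, (sch (gA b)).2 = b := fun b => by rw [hgA_sch b]
  have hgj_p : ∀ b, (sch (gj b)).1 = p0 := fun b => by rw [hgj2 b]
  have hgj_r : ∀ b, (sch (gj b)).2 = b := fun b => by rw [hgj2 b]
  -- getD characterizations in the final history
  have Ea : ∀ b, (hsn σ sch init tt p0).getD (hl σ sch init (ga b) p0) ([],[]) =
      (ct σ sch init (ga b) b,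
       ct σ sch init (ga b) b ++ [(p0 : ℕ), hl σ sch init (ga b) p0 + 1]) := by
    intro b
    have := hsn_getD_visit σ sch init hσ (hga_p b) (hga_tt b)
    rwa [hga_r b] at this
  have EA : ∀ b, (hsn σ sch init tt p0).getD (hl σ sch init (gA b) p0) ([],[]) =
      (ct σ sch init (gA b) b,
       ct σ sch init (gA b) b ++ [(p0 : ℕ), hl σ sch init (gA b) p0 + 1]) := by
    intro b
    have := hsn_getD_visit σ sch init hσ (hgA_p b) (hgA_tt b)
    rwa [hgA_r b] at this
  have Ej : ∀ b, (hsn σ sch init tt p0).getD (hl σ sch init (gj b) p0) ([],[]) =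
      (ct σ sch init (gj b) b,
       ct σ sch init (gj b) b ++ [(p0 : ℕ), hl σ sch init (gj b) p0 + 1]) := by
    intro b
    have := hsn_getD_visit σ sch init hσ (hgj_p b) (hgj_tt b)
    rwa [hgj_r b] at this
  -- length/count bounds
  have hcnt_ga : ∀ b, n ≤ hl σ sch init (ga b) p0 + 1 := by
    intro b
    have := hTn (ga b) (le_trans (le_max_right TM Tn) (hga_ge b))
    omega
  have hcnt_gA : ∀ b, n ≤ hl σ sch init (gA b) p0 + 1 := by
    intro b
    have := hTn (gA b) (le_trans (le_trans (le_max_right TM Tn) (le_max_right TL _)) (hgA_ge b))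
    omega
  have hM_ga : ∀ b (rm : Fin r), (init rm).length ≤ (ct σ sch init (ga b) b).length := by
    intro b rm
    exact le_trans (hM rm) (hTM (ga b) (le_trans (le_max_left TM Tn) (hga_ge b)) b)
  have hM_gA : ∀ b (rm : Fin r), (init rm).length ≤ (ct σ sch init (gA b) b).length := by
    intro b rm
    exact le_trans (hM rm) (hTM (gA b)
      (le_trans (le_trans (le_max_left TM Tn) (le_max_right TL _)) (hgA_ge b)) b)
  -- the generic real-world non-prefix fact
  have hnp : ∀ (g : Fin r → ℕ), (∀ b, (sch (g b)).1 = p0) → (∀ b, (sch (g b)).2 = b) →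
      (∀ b (rm : Fin r), (init rm).length ≤ (ct σ sch init (g b) b).length) →
      (∀ b, n ≤ hl σ sch init (g b) p0 + 1) →
      ∀ b b' : Fin r, b < b' →
      ¬ ((ct σ sch init (g b) b ++ [(p0 : ℕ), hl σ sch init (g b) p0 + 1]) <+:
          ct σ sch init (g b') b') := by
    intro g hp hr' hin hcn b b' hbb hcon
    have : (b' : Fin r) = (sch (g b)).2 := by
      apply same_room σ sch init hσ (hp b) (B := b')
      · rw [hr' b]; exact hin b b'
      · exact hcn b
      · rw [hr' b]; exact hcon
    rw [hr' b] at this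
    exact (Fin.ne_of_lt hbb).symm this
  refine ⟨tt, htt_p, L, fun b => hl σ sch init (ga b) p0, fun b => hl σ sch init (gA b) p0,
    fun b => hl σ sch init (gj b) p0, ?_, ?_, ?_, ?_, ?_, ?_, ?_, ?_, ?_, ?_, ?_, ?_⟩
  · intro b b' hbb
    exact hl_visit_lt σ sch init p0 (hga_p b) (hga_mono hbb)
  · intro b b' hbb
    exact hl_visit_lt σ sch init p0 (hgA_p b) (hgA_mono hbb)
  · intro b
    exact hl_visit_lt σ sch init p0 (hga_p b) (hga_tt b)
  · intro b
    exact hl_visit_lt σ sch init p0 (hgj_p b) (hgj_tt b)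
  · intro b
    exact hl_visit_lt σ sch init p0 (hgA_p b) (hgA_lt_gj b)
  · intro b
    exact hcnt_gA b
  · intro b
    rw [Ea b]
    exact hL b
  · intro b
    rw [EA b]
    exact hTL (gA b) (le_trans (le_max_left TL _) (hgA_ge b)) b
  · intro b b' hbb
    rw [Ea b, Ea b']
    exact hnp ga hga_p hga_r hM_ga hcnt_ga b b' hbb
  · intro b b' hbb
    rw [EA b, EA b']
    exact hnp gA hgA_p hgA_r hM_gA hcnt_gA b b' hbb
  · intro b
    rw [EA b, Ej b]
    show ct σ sch init (gA b) b ++ [(p0 : ℕ), hl σ sch init (gA b) p0 + 1]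
      <+: ct σ sch init (gj b) b
    have hstep : ct σ sch init (gA b) b ++ [(p0 : ℕ), hl σ sch init (gA b) p0 + 1]
        = ct σ sch init (gA b + 1) b := by
      rw [ct_succ σ sch init hσ, if_pos (hgA_r b).symm, hgA_p b]
    rw [hstep]
    exact ct_prefix σ sch init hσ b (hgA_lt_gj b)
  · intro b q
    rw [EA b, Ej b]
    obtain ⟨he1, he2⟩ := emit σ sch init hσ (show (sch (u b q)).2 = b by rw [hu2 b q])
      (hu_lt_gj b q)
    have hstep : (ct σ sch init (gA b) b ++ [(p0 : ℕ), hl σ sch init (gA b) p0 + 1]).length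
        = (ct σ sch init (gA b + 1) b).length := by
      rw [ct_succ σ sch init hσ, if_pos (hgA_r b).symm, hgA_p b]
    obtain ⟨k1, hk1⟩ := ct_len_even σ sch init hσ (gA b + 1) b
    obtain ⟨k2, hk2⟩ := ct_len_even σ sch init hσ (u b q) b
    have hkk : k1 ≤ k2 := by
      have := ct_len_mono σ sch init hσ b (show gA b + 1 ≤ u b q from hu1 b q)
      omega
    refine ⟨k2 - k1, ?_, ?_⟩
    · show _ < (ct σ sch init (gj b) b).length
      rw [hstep]
      omega
    · show (ct σ sch init (gj b) b).getD _ 0 = _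
      have hpos : (ct σ sch init (gA b) b ++ [(p0 : ℕ), hl σ sch init (gA b) p0 + 1]).length
          + 2 * (k2 - k1) = (ct σ sch init (u b q) b).length := by
        rw [hstep]
        omega
      rw [hpos, he1, hu2 b q]

end PP

/-- with countably infinitely many room configurations (finite
strings, i.e., transcripts), even with arbitrary unknown initial configurations
the prisoners have a winning strategy, namely the strategy where each visiting
prisoner appends his name followed by his current visit count to the room's
transcript. -/
theorem infinite_configurations_winning (n r : ℕ) (hn : 0 < n) (hr : 1 < r) :
    ∃ σ : Strategy n (List ℕ),
      (∀ (p : Fin n) (h : Hist (List ℕ)) (c : List ℕ),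
          (σ p h c).1 = c ++ [(p : ℕ), h.length + 1]) ∧
      (∀ init : Fin r → List ℕ, Winning σ init) := by
  classical
  let σ : Strategy n (List ℕ) := fun p h c =>
    (c ++ [(p : ℕ), h.length + 1], if PP.Cert n r h then true else false)
  have hσ : ∀ (p : Fin n) (h : Hist (List ℕ)) (c : List ℕ),
      (σ p h c).1 = c ++ [(p : ℕ), h.length + 1] := fun _ _ _ => rfl
  refine ⟨σ, hσ, ?_⟩
  intro init sch hvalid
  constructor
  · obtain ⟨t, ht1, ht2⟩ := PP.cert_live σ sch init hσ hvalid hn (lt_trans zero_lt_one hr)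
    refine ⟨t + 1, ?_⟩
    have hstep : (prun σ sch init (t+1)).declared =
        ((prun σ sch init t).declared ||
          (σ (sch t).1 ((prun σ sch init t).hist (sch t).1)
            ((prun σ sch init t).rooms (sch t).2)).2) := rfl
    rw [hstep]
    have : (σ (sch t).1 ((prun σ sch init t).hist (sch t).1)
        ((prun σ sch init t).rooms (sch t).2)).2 = true := by
      show (if PP.Cert n r ((prun σ sch init t).hist (sch t).1) then true else false) = true
      rw [ht1]
      exact if_pos ht2
    rw [this, Bool.or_true]
  · have hdecl : ∀ t, (prun σ sch init t).declared = true →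
        ∃ s, s < t ∧ PP.Cert n r (PP.hsn σ sch init s (sch s).1) := by
      intro t
      induction t with
      | zero => intro h; exact absurd h (by simp [prun])
      | succ t ih =>
        intro h
        have hstep : (prun σ sch init (t+1)).declared =
            ((prun σ sch init t).declared ||
              (σ (sch t).1 ((prun σ sch init t).hist (sch t).1)
                ((prun σ sch init t).rooms (sch t).2)).2) := rfl
        rw [hstep] at h
        rcases (Bool.or_eq_true _ _).mp h with h' | h'
        · obtain ⟨s, hs1, hs2⟩ := ih h'
          exact ⟨s, Nat.lt_succ_of_lt hs1, hs2⟩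
        · have h'' : (if PP.Cert n r ((prun σ sch init t).hist (sch t).1)
              then true else false) = true := h'
          by_cases hc : PP.Cert n r ((prun σ sch init t).hist (sch t).1)
          · exact ⟨t, Nat.lt_succ_self t, hc⟩
          · rw [if_neg hc] at h''
            exact absurd h'' (by simp)
    intro t ht p rm
    obtain ⟨s, hst, hcert⟩ := hdecl t ht
    obtain ⟨u, hu1, hu2⟩ := PP.cert_sound σ sch init hσ s (sch s).1 hcert p rm
    exact ⟨u, lt_trans hu1 hst, hu2⟩
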